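/- Let X be a Nakagami-m random variable with shape m > 0 and scale Ω > 0. Then for every s > 0, E[exp(−sX)] ≤ (2Γ(2m)/Γ(m)) · Ω^m · s^{−2m}. (Upper bound on the moment generating function of a Nakagami-m random variable; Theorem 4 of the paper.) -/

import Mathlib

open MeasureTheory ProbabilityTheory Real

/-- The density of a Nakagami-`m` random variable with shape `m` and scale `Ω`:
`f_{m,Ω}(x) = (2 Ω^m / Γ(m)) x^(2m-1) exp(-Ω x²)` for `x > 0`, and `0` otherwise. -/
noncomputable def nakagamiPDF (m Ω x : ℝ) : ℝ :=
  if 0 < x then 2 * Ω ^ m / Real.Gamma m * x ^ (2 * m - 1) * Real.exp (-Ω * x ^ 2) else 0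

/-- `X` is a Nakagami-`m` random variable (shape `m`, scale `Ω`) on `(E, P)`:
its law has density `nakagamiPDF m Ω` with respect to Lebesgue measure. -/
def IsNakagami {E : Type*} [MeasurableSpace E] (P : MeasureTheory.Measure E)
    (X : E → ℝ) (m Ω : ℝ) : Prop :=
  MeasureTheory.Measure.map X P =
    MeasureTheory.volume.withDensity (fun x => ENNReal.ofReal (nakagamiPDF m Ω x))

lemma nakagamiPDF_meas (m Ω : ℝ) : Measurable (nakagamiPDF m Ω) := by
  unfold nakagamiPDF
  exact Measurable.ite measurableSet_Ioi
    (((measurable_id'.pow_const _).const_mul _).mul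
      (((measurable_id'.pow_const 2).const_mul (-Ω)).exp)) measurable_const

lemma nakagamiPDF_nonneg {m Ω : ℝ} (hm : 0 < m) (hΩ : 0 < Ω) (x : ℝ) :
    0 ≤ nakagamiPDF m Ω x := by
  unfold nakagamiPDF
  split_ifs with h
  · positivity
  · exact le_refl 0

/-- Upper bound on the MGF of a Nakagami-`m` random variable:
for `s > 0`, `E[exp(-s X)] ≤ (2 Γ(2m)/Γ(m)) Ω^m s^(-2m)`. -/
theorem nakagami_mgf_upper_bound
    {E : Type*} [MeasurableSpace E] (P : Measure E) [IsProbabilityMeasure P]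
    (m Ω : ℝ) (hm : 0 < m) (hΩ : 0 < Ω)
    (X : E → ℝ) (hX : Measurable X) (hNak : IsNakagami P X m Ω)
    (s : ℝ) (hs : 0 < s) :
    ∫ ω, Real.exp (-s * X ω) ∂P ≤
      2 * Real.Gamma (2 * m) / Real.Gamma m * Ω ^ m * s ^ (-(2 * m)) := by
  set c : ℝ := 2 * Ω ^ m / Real.Gamma m with hc
  set g : ℝ → ℝ := (Set.Ioi (0:ℝ)).indicator
    (fun x => c * (x ^ (2 * m - 1) * Real.exp (-(s * x)))) with hg
  have hGm : 0 < Real.Gamma m := Real.Gamma_pos_of_pos hm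
  have hcpos : 0 < c := by positivity
  have hint : Integrable g := by
    refine (IntegrableOn.integrable_indicator ?_ measurableSet_Ioi)
    refine Integrable.const_mul ?_ c
    have := integrableOn_rpow_mul_exp_neg_mul_rpow
      (by linarith : (-1:ℝ) < 2 * m - 1) (zero_lt_one' ℝ) hs
    refine this.congr_fun (fun x hx => ?_) measurableSet_Ioi
    beta_reduce
    rw [Real.rpow_one, neg_mul]
  have h1 : ∫ ω, Real.exp (-s * X ω) ∂P
      = ∫ x, nakagamiPDF m Ω x * Real.exp (-s * x) := by
    have h0 : ∫ ω, Real.exp (-s * X ω) ∂P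
        = ∫ x, Real.exp (-s * x) ∂(Measure.map X P) :=
      (integral_map (f := fun x => Real.exp (-s * x)) hX.aemeasurable
        (Continuous.aestronglyMeasurable
          (Real.continuous_exp.comp (continuous_const.mul continuous_id)))).symm
    rw [h0, hNak]
    rw [show (fun x => ENNReal.ofReal (nakagamiPDF m Ω x))
        = (fun x => ((nakagamiPDF m Ω x).toNNReal : ENNReal)) from rfl]
    rw [integral_withDensity_eq_integral_smul (nakagamiPDF_meas m Ω).real_toNNReal]
    congr 1
    funext x
    rw [NNReal.smul_def, Real.coe_toNNReal _ (nakagamiPDF_nonneg hm hΩ x), smul_eq_mul]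
  rw [h1]
  have h2 : ∫ x, nakagamiPDF m Ω x * Real.exp (-s * x) ≤ ∫ x, g x := by
    refine integral_mono_of_nonneg (ae_of_all _ fun x => ?_) hint (ae_of_all _ fun x => ?_)
    · exact mul_nonneg (nakagamiPDF_nonneg hm hΩ x) (Real.exp_nonneg _)
    · simp only [g, nakagamiPDF]
      by_cases hx : 0 < x
      · rw [if_pos hx, Set.indicator_of_mem (Set.mem_Ioi.mpr hx)]
        rw [← hc]
        have h3 : Real.exp (-Ω * x ^ 2) ≤ 1 := by
          rw [Real.exp_le_one_iff]
          nlinarith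
        have h4 : 0 ≤ c * x ^ (2 * m - 1) := by positivity
        calc c * x ^ (2 * m - 1) * Real.exp (-Ω * x ^ 2) * Real.exp (-s * x)
            ≤ c * x ^ (2 * m - 1) * 1 * Real.exp (-s * x) := by
              apply mul_le_mul_of_nonneg_right _ (Real.exp_nonneg _)
              exact mul_le_mul_of_nonneg_left h3 h4
          _ = c * (x ^ (2 * m - 1) * Real.exp (-(s * x))) := by ring_nf
      · rw [if_neg hx, Set.indicator_of_notMem (by simpa using hx), zero_mul]
  refine h2.trans_eq ?_
  rw [hg, integral_indicator measurableSet_Ioi, integral_const_mul,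
    integral_rpow_mul_exp_neg_mul_Ioi (by linarith : (0:ℝ) < 2 * m) hs]
  rw [hc, Real.rpow_neg hs.le, one_div, Real.inv_rpow hs.le]
  ring
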